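/- Let D be a set and Y : D² → D² a Yang–Baxter map. Then the maps Y^{12} = Y × id_D : D³ → D³ and Y^{23} = id_D × Y : D³ → D³ are tetrahedron maps. -/
import Mathlib


/-- `T` acting on factors 1,2,3 of the sixfold Cartesian product `D⁶`. -/
def tetra123 {D : Type*} (T : D × D × D → D × D × D) :
    D × D × D × D × D × D → D × D × D × D × D × D :=
  fun q =>
    match q with
    | (x, y, z, r, s, t) =>
      ((T (x, y, z)).1, (T (x, y, z)).2.1, (T (x, y, z)).2.2, r, s, t)

/-- `T` acting on factors 1,4,5 of the sixfold Cartesian product `D⁶`. -/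
def tetra145 {D : Type*} (T : D × D × D → D × D × D) :
    D × D × D × D × D × D → D × D × D × D × D × D :=
  fun q =>
    match q with
    | (x, y, z, r, s, t) =>
      ((T (x, r, s)).1, y, z, (T (x, r, s)).2.1, (T (x, r, s)).2.2, t)

/-- `T` acting on factors 2,4,6 of the sixfold Cartesian product `D⁶`. -/
def tetra246 {D : Type*} (T : D × D × D → D × D × D) :
    D × D × D × D × D × D → D × D × D × D × D × D :=
  fun q =>
    match q with
    | (x, y, z, r, s, t) =>
      (x, (T (y, r, t)).1, z, (T (y, r, t)).2.1, s, (T (y, r, t)).2.2)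

/-- `T` acting on factors 3,5,6 of the sixfold Cartesian product `D⁶`. -/
def tetra356 {D : Type*} (T : D × D × D → D × D × D) :
    D × D × D × D × D × D → D × D × D × D × D × D :=
  fun q =>
    match q with
    | (x, y, z, r, s, t) =>
      (x, y, (T (z, s, t)).1, r, (T (z, s, t)).2.1, (T (z, s, t)).2.2)

/-- The (Zamolodchikov) tetrahedron equation for a map `T : D³ → D³`. -/
def IsTetrahedronMap {D : Type*} (T : D × D × D → D × D × D) : Prop :=
  tetra123 T ∘ tetra145 T ∘ tetra246 T ∘ tetra356 T =
    tetra356 T ∘ tetra246 T ∘ tetra145 T ∘ tetra123 T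

/-- `Y` acting on factors 1,2 of `D³` (i.e. `Y × id`). -/
def yb12 {D : Type*} (Y : D × D → D × D) : D × D × D → D × D × D :=
  fun q => ((Y (q.1, q.2.1)).1, (Y (q.1, q.2.1)).2, q.2.2)

/-- `Y` acting on factors 1,3 of `D³`. -/
def yb13 {D : Type*} (Y : D × D → D × D) : D × D × D → D × D × D :=
  fun q => ((Y (q.1, q.2.2)).1, q.2.1, (Y (q.1, q.2.2)).2)

/-- `Y` acting on factors 2,3 of `D³` (i.e. `id × Y`). -/
def yb23 {D : Type*} (Y : D × D → D × D) : D × D × D → D × D × D :=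
  fun q => (q.1, (Y (q.2.1, q.2.2)).1, (Y (q.2.1, q.2.2)).2)

/-- The Yang–Baxter equation for a map `Y : D² → D²`. -/
def IsYangBaxterMap {D : Type*} (Y : D × D → D × D) : Prop :=
  yb12 Y ∘ yb13 Y ∘ yb23 Y = yb23 Y ∘ yb13 Y ∘ yb12 Y

theorem stmt_2 {D : Type*} (Y : D × D → D × D) (hY : IsYangBaxterMap Y) :
    IsTetrahedronMap (yb12 Y) ∧ IsTetrahedronMap (yb23 Y) := by
  have hY' : ∀ a b c : D, yb12 Y (yb13 Y (yb23 Y (a,b,c))) = yb23 Y (yb13 Y (yb12 Y (a,b,c))) :=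
    fun a b c => congrFun hY (a,b,c)
  constructor
  · funext ⟨x,y,z,r,s,t⟩
    have h := hY' x y r
    simp only [Function.comp, tetra123, tetra145, tetra246, tetra356, yb12, yb13, yb23,
      Prod.mk.injEq] at h ⊢
    exact ⟨h.1, h.2.1, trivial, h.2.2, trivial⟩
  · funext ⟨x,y,z,r,s,t⟩
    have h := hY' r s t
    simp only [Function.comp, tetra123, tetra145, tetra246, tetra356, yb12, yb13, yb23,
      Prod.mk.injEq] at h ⊢
    exact ⟨trivial, trivial, trivial, h.1, h.2.1, h.2.2⟩
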